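/- arXiv:2510.06879 — 2 statements merged into one kernel-verified Lean document; each statement's English description precedes it below -/
import Mathlib

section
/- Let T > 0, let H : [0,T]^2 → ℝ, and suppose there exists t* ∈ [0,T) such that H is continuous at the point (t*, t*) and H(t*, t*) > 0. Let h : ℝ → ℝ be a continuous, odd function that is not linear, i.e., there is no q ∈ ℝ with h(x) = q x for all x ∈ ℝ. Then for every integer M ≥ 3 there exist points t_0 < t_1 < … < t_{M-1} in [0,T] and real numbers x_0, …, x_{M-1} such that ∑_{i=0}^{M-1} ∑_{j=0}^{M-1} x_i · H(t_i, t_j) · h(x_j) < 0. -/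
set_option maxHeartbeats 1000000


/-- **Price manipulation for two-variable impact kernels (Theorem, part 1).**
Let `T > 0`, `H : [0,T]² → ℝ`, and suppose there is `t* ∈ [0,T)` such that `H` is
continuous at `(t*, t*)` with `H(t*,t*) > 0`.  Let `h : ℝ → ℝ` be a continuous, odd
function which is not linear.  Then for every `M ≥ 3` there exist points
`t_0 < … < t_{M-1}` in `[0,T]` and reals `x_0, …, x_{M-1}` such that
`∑_{i,j} x_i · H(t_i,t_j) · h(x_j) < 0`. -/
theorem price_manipulation_two_variable_kernel
    (T : ℝ) (hT : 0 < T)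
    (H : ℝ → ℝ → ℝ) (tstar : ℝ) (htstar : tstar ∈ Set.Ico (0 : ℝ) T)
    (hHcont : ContinuousAt (fun q : ℝ × ℝ => H q.1 q.2) (tstar, tstar))
    (hHpos : 0 < H tstar tstar)
    (h : ℝ → ℝ) (hhcont : Continuous h)
    (hhodd : ∀ x : ℝ, h (-x) = -h x)
    (hhnotlin : ¬ ∃ q : ℝ, ∀ x : ℝ, h x = q * x)
    (M : ℕ) (hM : 3 ≤ M) :
    ∃ t x : Fin M → ℝ, StrictMono t ∧ (∀ i, t i ∈ Set.Icc (0 : ℝ) T) ∧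
      ∑ i : Fin M, ∑ j : Fin M, x i * H (t i) (t j) * h (x j) < 0 := by
  obtain ⟨htstar0, htstarT⟩ := htstar
  have h0 : h 0 = 0 := by have := hhodd 0; simp only [neg_zero] at this; linarith
  -- Step 1: h is not additive
  obtain ⟨a, b, hab⟩ : ∃ a b : ℝ, h (a + b) ≠ h a + h b := by
    by_contra hc
    push_neg at hc
    refine hhnotlin ⟨h 1, fun x => ?_⟩
    let f : ℝ →+ ℝ := ⟨⟨h, h0⟩, fun u v => hc u v⟩
    have := map_real_smul f hhcont x (1 : ℝ)
    simpa [f, mul_comm] using this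
  set d : ℝ := h a + h b - h (a + b) with hd_def
  clear_value d
  have hd : d ≠ 0 := by
    intro hh
    apply hab
    rw [hd_def] at hh
    linarith
  have hdpos : 0 < |d| := abs_pos.mpr hd
  set s : ℝ := if 0 < d then -1 else 1 with hs_def
  have hs1 : |s| = 1 := by rw [hs_def]; split <;> simp
  clear_value s
  have hsd : s * d = -|d| := by
    rcases lt_trichotomy 0 d with hp | hz | hn
    · rw [hs_def, if_pos hp, abs_of_pos hp]; ring
    · exact absurd hz.symm hd
    · rw [hs_def, if_neg (by linarith), abs_of_neg hn]; ring
  -- Step 2: choose ε by continuity of h at a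
  have hcont2 : ContinuousAt (fun e : ℝ => h (a + e * s)) 0 :=
    (hhcont.comp (continuous_const.add (continuous_id.mul continuous_const))).continuousAt
  obtain ⟨δ₀, hδ₀, hδ₀'⟩ := Metric.continuousAt_iff.mp hcont2 (|d| / 2) (by linarith)
  set ε : ℝ := δ₀ / 2 with hε_def
  clear_value ε
  have hεpos : 0 < ε := by rw [hε_def]; linarith
  have hdistε : dist ε (0 : ℝ) < δ₀ := by
    rw [Real.dist_eq, sub_zero, abs_of_pos hεpos]; rw [hε_def]; linarith
  have hnear := hδ₀' hdistε
  simp only [zero_mul, add_zero] at hnear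
  rw [Real.dist_eq] at hnear
  set a' : ℝ := a + ε * s with ha'
  clear_value a'
  set Sh : ℝ := h a' + h b + h (-(a + b)) with hSh
  clear_value Sh
  have hShd : Sh - d = h a' - h a := by
    rw [hSh, hd_def, hhodd (a + b)]; ring
  have hnear' : |Sh - d| < |d| / 2 := by rw [hShd]; exact hnear
  have hsSh : s * Sh < -(|d| / 2) := by
    have h1 : s * Sh = s * d + s * (Sh - d) := by ring
    have h3 : s * (Sh - d) ≤ |Sh - d| := by
      calc s * (Sh - d) ≤ |s * (Sh - d)| := le_abs_self _
        _ = |Sh - d| := by rw [abs_mul, hs1, one_mul]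
    linarith
  have hKneg : ε * s * Sh < 0 := by
    have : ε * (s * Sh) < 0 := mul_neg_of_pos_of_neg hεpos (by linarith)
    linarith [this, mul_assoc ε s Sh]
  -- Step 3: the trade vector x
  set i0 : Fin M := ⟨0, by omega⟩ with hi0
  set i1 : Fin M := ⟨1, by omega⟩ with hi1
  set i2 : Fin M := ⟨2, by omega⟩ with hi2
  have hne01 : i0 ≠ i1 := by simp [hi0, hi1, Fin.ext_iff]
  have hne02 : i0 ≠ i2 := by simp [hi0, hi2, Fin.ext_iff]
  have hne12 : i1 ≠ i2 := by simp [hi1, hi2, Fin.ext_iff]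
  set x : Fin M → ℝ := fun i =>
    if i = i0 then a' else if i = i1 then b else if i = i2 then -(a + b) else 0 with hx
  have key : ∀ g : ℝ → ℝ, g 0 = 0 →
      ∑ i : Fin M, g (x i) = g a' + g b + g (-(a + b)) := by
    intro g hg
    have step : ∀ i : Fin M, g (x i) =
        (if i = i0 then g a' else 0) + ((if i = i1 then g b else 0) +
          (if i = i2 then g (-(a + b)) else 0)) := by
      intro i
      rw [hx]
      split_ifs with h₀ h₁ h₂ <;> simp_all
    rw [Finset.sum_congr rfl fun i _ => step i, Finset.sum_add_distrib,
      Finset.sum_add_distrib]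
    simp [Finset.sum_ite_eq']
    ring
  have hSx : ∑ i : Fin M, x i = ε * s := by
    have := key id rfl
    simp only [id] at this
    rw [this, ha']; ring
  have hShx : ∑ i : Fin M, h (x i) = Sh := (key h h0).trans hSh.symm
  -- Step 4: constants
  set c : ℝ := H tstar tstar with hc
  set Ax : ℝ := ∑ i : Fin M, |x i| with hAx
  set Ah : ℝ := ∑ i : Fin M, |h (x i)| with hAh
  have hAx0 : 0 ≤ Ax := Finset.sum_nonneg fun i _ => abs_nonneg _
  have hAh0 : 0 ≤ Ah := Finset.sum_nonneg fun i _ => abs_nonneg _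
  set B : ℝ := Ax * Ah + 1 with hB
  have hB0 : 0 < B := by nlinarith [mul_nonneg hAx0 hAh0]
  set K : ℝ := -(ε * s * Sh) with hKdef
  have hKpos : 0 < K := by rw [hKdef]; linarith
  set η : ℝ := c * K / (2 * B) with hη
  have hηpos : 0 < η := by
    rw [hη]; exact div_pos (mul_pos hHpos hKpos) (by linarith)
  -- Step 5: the time points
  obtain ⟨δ, hδpos, hδ⟩ := Metric.continuousAt_iff.mp hHcont η hηpos
  have hMpos : (0 : ℝ) < (M : ℝ) := by exact_mod_cast (by omega : 0 < M)
  set e : ℝ := min (δ / (2 * M)) ((T - tstar) / M) with he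
  have hepos : 0 < e :=
    lt_min (div_pos hδpos (by positivity)) (div_pos (by linarith) hMpos)
  set t : Fin M → ℝ := fun i => tstar + (i.val : ℝ) * e with ht
  have hiM : ∀ i : Fin M, ((i.val : ℝ)) < (M : ℝ) := fun i => by exact_mod_cast i.isLt
  have hie1 : ∀ i : Fin M, (i.val : ℝ) * e < T - tstar := by
    intro i
    have h1 : (i.val : ℝ) * e < (M : ℝ) * e :=
      mul_lt_mul_of_pos_right (hiM i) hepos
    have h2 : (M : ℝ) * e ≤ (M : ℝ) * ((T - tstar) / M) :=
      mul_le_mul_of_nonneg_left (min_le_right _ _) hMpos.le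
    have h3 : (M : ℝ) * ((T - tstar) / M) = T - tstar := by field_simp
    linarith
  have hie2 : ∀ i : Fin M, (i.val : ℝ) * e < δ := by
    intro i
    have h1 : (i.val : ℝ) * e < (M : ℝ) * e :=
      mul_lt_mul_of_pos_right (hiM i) hepos
    have h2 : (M : ℝ) * e ≤ (M : ℝ) * (δ / (2 * M)) :=
      mul_le_mul_of_nonneg_left (min_le_left _ _) hMpos.le
    have h3 : (M : ℝ) * (δ / (2 * M)) = δ / 2 := by field_simp
    linarith
  have hie0 : ∀ i : Fin M, 0 ≤ (i.val : ℝ) * e :=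
    fun i => mul_nonneg (Nat.cast_nonneg _) hepos.le
  have htmono : StrictMono t := by
    intro i j hij
    have hij' : (i.val : ℝ) < (j.val : ℝ) := by exact_mod_cast hij
    have := mul_lt_mul_of_pos_right hij' hepos
    rw [ht]; dsimp only; linarith
  have hmem : ∀ i, t i ∈ Set.Icc (0 : ℝ) T := by
    intro i
    constructor
    · rw [ht]; dsimp only; linarith [hie0 i]
    · rw [ht]; dsimp only; linarith [hie1 i]
  have hdistH : ∀ i j : Fin M, |H (t i) (t j) - c| < η := by
    intro i j
    have hd1 : dist ((t i, t j)) ((tstar, tstar)) < δ := by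
      rw [Prod.dist_eq]
      apply max_lt
      · rw [Real.dist_eq, ht]; dsimp only
        rw [add_sub_cancel_left, abs_of_nonneg (hie0 _)]
        exact hie2 i
      · rw [Real.dist_eq, ht]; dsimp only
        rw [add_sub_cancel_left, abs_of_nonneg (hie0 _)]
        exact hie2 j
    have := hδ hd1
    rw [Real.dist_eq] at this
    exact this
  -- Step 6: conclude
  refine ⟨t, x, htmono, hmem, ?_⟩
  have hsplit : ∑ i : Fin M, ∑ j : Fin M, x i * H (t i) (t j) * h (x j)
      = (∑ i : Fin M, ∑ j : Fin M, x i * c * h (x j))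
        + ∑ i : Fin M, ∑ j : Fin M, x i * (H (t i) (t j) - c) * h (x j) := by
    rw [← Finset.sum_add_distrib]
    refine Finset.sum_congr rfl fun i _ => ?_
    rw [← Finset.sum_add_distrib]
    exact Finset.sum_congr rfl fun j _ => by ring
  have hA : ∑ i : Fin M, ∑ j : Fin M, x i * c * h (x j) = c * (ε * s) * Sh := by
    have hrow : ∀ i : Fin M, ∑ j : Fin M, x i * c * h (x j) = x i * c * Sh := by
      intro i
      rw [← Finset.mul_sum, hShx]
    rw [Finset.sum_congr rfl fun i _ => hrow i, ← Finset.sum_mul, ← Finset.sum_mul, hSx]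
    ring
  have hB2 : ∑ i : Fin M, ∑ j : Fin M, x i * (H (t i) (t j) - c) * h (x j)
      ≤ η * (Ax * Ah) := by
    have hterm : ∀ i j : Fin M, x i * (H (t i) (t j) - c) * h (x j)
        ≤ |x i| * η * |h (x j)| := by
      intro i j
      have h1 : x i * (H (t i) (t j) - c) * h (x j)
          ≤ |x i| * |H (t i) (t j) - c| * |h (x j)| := by
        calc x i * (H (t i) (t j) - c) * h (x j)
            ≤ |x i * (H (t i) (t j) - c) * h (x j)| := le_abs_self _
          _ = |x i| * |H (t i) (t j) - c| * |h (x j)| := by rw [abs_mul, abs_mul]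
      have h2 : |H (t i) (t j) - c| ≤ η := (hdistH i j).le
      nlinarith [abs_nonneg (x i), abs_nonneg (h (x j)),
        mul_nonneg (mul_nonneg (abs_nonneg (x i)) (sub_nonneg.mpr h2))
          (abs_nonneg (h (x j)))]
    calc ∑ i : Fin M, ∑ j : Fin M, x i * (H (t i) (t j) - c) * h (x j)
        ≤ ∑ i : Fin M, ∑ j : Fin M, |x i| * η * |h (x j)| :=
          Finset.sum_le_sum fun i _ => Finset.sum_le_sum fun j _ => hterm i j
      _ = η * (Ax * Ah) := by
          have hrow : ∀ i : Fin M, ∑ j : Fin M, |x i| * η * |h (x j)| = |x i| * η * Ah := by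
            intro i
            rw [← Finset.mul_sum, hAh]
          rw [Finset.sum_congr rfl fun i _ => hrow i, ← Finset.sum_mul, ← Finset.sum_mul, hAx]
          ring
  have hAxAhB : η * (Ax * Ah) ≤ η * B := by
    apply mul_le_mul_of_nonneg_left _ hηpos.le
    rw [hB]; linarith
  have hηB : η * B = c * K / 2 := by
    rw [hη]; field_simp
  have hcK : c * (ε * s) * Sh = -(c * K) := by rw [hKdef]; ring
  have hcKpos : 0 < c * K := mul_pos hHpos hKpos
  rw [hsplit, hA]
  linarith
end

section
/- Let T > 0 and let G : [0,T] → ℝ be a kernel that is continuous at 0 with G(0) > 0. Let h : ℝ → ℝ be a continuous, odd function that is not linear, i.e., there is no q ∈ ℝ with h(x) = q x for all x ∈ ℝ. Then for every integer M ≥ 3 there exist points t_0 < t_1 < … < t_{M-1} in [0,T] and real numbers x_0, …, x_{M-1} such that ∑_{i=0}^{M-1} ∑_{j=0}^{M-1} x_i · G(|t_i − t_j|) · h(x_j) < 0. -/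
open Finset Filter Topology

private lemma dsum_helper {M : ℕ} (u v : Fin M → ℝ) (c : ℝ) :
    ∑ i : Fin M, ∑ j : Fin M, u i * c * v j = (∑ i : Fin M, u i) * c * (∑ j : Fin M, v j) := by
  simp_rw [← Finset.mul_sum, ← Finset.sum_mul]

private lemma exists_neg_triple (h : ℝ → ℝ) (hc : Continuous h)
    (hodd : ∀ x : ℝ, h (-x) = -h x)
    (hnl : ¬ ∃ q : ℝ, ∀ x : ℝ, h x = q * x) :
    ∃ a b c : ℝ, (a + b + c) * (h a + h b + h c) < 0 := by
  by_contra H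
  push_neg at H
  apply hnl
  have hadd : ∀ a b : ℝ, h (a + b) = h a + h b := by
    intro a b
    have h1 : ∀ d, a + b < d → h a + h b ≤ h d := by
      intro d hd
      have hH := H a b (-d)
      rw [hodd] at hH
      nlinarith
    have h2 : ∀ d, d < a + b → h d ≤ h a + h b := by
      intro d hd
      have hH := H a b (-d)
      rw [hodd] at hH
      nlinarith
    have tlim : Tendsto (fun n : ℕ => (1 : ℝ) / (n + 1)) atTop (𝓝 0) :=
      tendsto_one_div_add_atTop_nhds_zero_nat
    have t1 : Tendsto (fun n : ℕ => h (a + b + 1 / (n + 1))) atTop (𝓝 (h (a + b))) := by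
      have : Tendsto (fun n : ℕ => a + b + 1 / (n + 1)) atTop (𝓝 (a + b)) := by
        simpa using tendsto_const_nhds.add tlim
      exact (hc.continuousAt.tendsto).comp this
    have t2 : Tendsto (fun n : ℕ => h (a + b - 1 / (n + 1))) atTop (𝓝 (h (a + b))) := by
      have : Tendsto (fun n : ℕ => a + b - 1 / (n + 1)) atTop (𝓝 (a + b)) := by
        simpa using tendsto_const_nhds.sub tlim
      exact (hc.continuousAt.tendsto).comp this
    have le1 : h a + h b ≤ h (a + b) := by
      refine ge_of_tendsto' t1 fun n => h1 _ ?_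
      have : (0 : ℝ) < 1 / (n + 1) := by positivity
      linarith
    have le2 : h (a + b) ≤ h a + h b := by
      refine le_of_tendsto' t2 fun n => h2 _ ?_
      have : (0 : ℝ) < 1 / (n + 1) := by positivity
      linarith
    linarith
  refine ⟨h 1, fun x => ?_⟩
  let f : ℝ →+ ℝ := AddMonoidHom.mk' h hadd
  have hfc : Continuous ⇑f := hc
  have hco : ∀ y, (f.toRealLinearMap hfc) y = h y :=
    fun y => congrFun (AddMonoidHom.coe_toRealLinearMap f hfc) y
  have := (f.toRealLinearMap hfc).map_smul x 1
  rw [hco, hco] at this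
  simpa [mul_comm] using this

/-- **Price manipulation for convolution kernels (Theorem, part 2).**
Let `T > 0` and let `G : [0,T] → ℝ` be continuous at `0` with `G(0) > 0`.  Let
`h : ℝ → ℝ` be a continuous, odd function which is not linear.  Then for every
`M ≥ 3` there exist points `t_0 < … < t_{M-1}` in `[0,T]` and reals
`x_0, …, x_{M-1}` such that `∑_{i,j} x_i · G(|t_i − t_j|) · h(x_j) < 0`. -/
theorem price_manipulation_convolution_kernel
    (T : ℝ) (hT : 0 < T)
    (G : ℝ → ℝ) (hGcont : ContinuousAt G 0) (hGpos : 0 < G 0)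
    (h : ℝ → ℝ) (hhcont : Continuous h)
    (hhodd : ∀ x : ℝ, h (-x) = -h x)
    (hhnotlin : ¬ ∃ q : ℝ, ∀ x : ℝ, h x = q * x)
    (M : ℕ) (hM : 3 ≤ M) :
    ∃ t x : Fin M → ℝ, StrictMono t ∧ (∀ i, t i ∈ Set.Icc (0 : ℝ) T) ∧
      ∑ i : Fin M, ∑ j : Fin M, x i * G |t i - t j| * h (x j) < 0 := by
  obtain ⟨a, b, c, habc⟩ := exists_neg_triple h hhcont hhodd hhnotlin
  have h0 : h 0 = 0 := by have := hhodd 0; simp at this; linarith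
  -- the trade vector
  set F : ℕ → ℝ := fun n => if n = 0 then a else if n = 1 then b else if n = 2 then c else 0
    with hF
  set x : Fin M → ℝ := fun i => F i.val with hx
  have hMpos : (0 : ℕ) < M := by omega
  have hsub : Finset.range 3 ⊆ Finset.range M := Finset.range_subset_range.mpr hM
  have hS : ∑ i : Fin M, x i = a + b + c := by
    rw [hx, Fin.sum_univ_eq_sum_range]
    rw [← Finset.sum_subset hsub (fun n _ hn => by
      simp only [Finset.mem_range, not_lt] at hn
      simp only [hF]
      rw [if_neg (by omega), if_neg (by omega), if_neg (by omega)])]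
    simp [Finset.sum_range_succ, hF]
  have hH : ∑ i : Fin M, h (x i) = h a + h b + h c := by
    rw [hx, Fin.sum_univ_eq_sum_range (fun n => h (F n))]
    rw [← Finset.sum_subset hsub (fun n _ hn => by
      simp only [Finset.mem_range, not_lt] at hn
      simp only [hF]
      rw [if_neg (by omega), if_neg (by omega), if_neg (by omega)]
      exact h0)]
    simp [Finset.sum_range_succ, hF]
  set S : ℝ := a + b + c with hSdef
  set Hh : ℝ := h a + h b + h c with hHdef
  set A : ℝ := (∑ i : Fin M, |x i|) * (∑ j : Fin M, |h (x j)|) with hA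
  have hAnn : 0 ≤ A :=
    mul_nonneg (Finset.sum_nonneg fun i _ => abs_nonneg _)
      (Finset.sum_nonneg fun i _ => abs_nonneg _)
  set ε : ℝ := (-(G 0 * S * Hh)) / (2 * (A + 1)) with hε
  have hP : G 0 * S * Hh < 0 := by
    have : S * Hh < 0 := habc
    nlinarith
  have hεpos : 0 < ε := by
    apply div_pos (by linarith) (by linarith)
  have hεA : ε * (A + 1) = -(G 0 * S * Hh) / 2 := by
    rw [hε]; field_simp
  -- choose δ from continuity
  obtain ⟨δ, hδpos, hδ⟩ := Metric.continuousAt_iff.mp hGcont ε hεpos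
  set d : ℝ := min (T / M) (δ / M) with hd
  have hdpos : 0 < d := lt_min (by positivity) (by positivity)
  set t : Fin M → ℝ := fun i => (i : ℝ) * d with ht
  have htmono : StrictMono t := by
    intro i j hij
    have : (i : ℝ) < (j : ℝ) := by exact_mod_cast hij
    exact mul_lt_mul_of_pos_right this hdpos
  have htmem : ∀ i, t i ∈ Set.Icc (0 : ℝ) T := by
    intro i
    have hi : (i : ℝ) ≤ M := by
      have := i.isLt; exact_mod_cast this.le
    constructor
    · exact mul_nonneg (by positivity) hdpos.le
    · calc (i : ℝ) * d ≤ M * d := mul_le_mul_of_nonneg_right hi hdpos.le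
        _ ≤ M * (T / M) := mul_le_mul_of_nonneg_left (min_le_left _ _) (by positivity)
        _ = T := by field_simp
  have hker : ∀ i j : Fin M, |G |t i - t j| - G 0| ≤ ε := by
    intro i j
    have hij : |t i - t j| < δ := by
      have hi : (0:ℝ) ≤ t i := (htmem i).1
      have hj : (0:ℝ) ≤ t j := (htmem j).1
      have hi2 : t i ≤ ((M : ℝ) - 1) * d := by
        have : (i : ℝ) ≤ (M : ℝ) - 1 := by
          have := i.isLt
          have : (i : ℕ) ≤ M - 1 := by omega
          have h3 : ((i : ℕ) : ℝ) ≤ ((M - 1 : ℕ) : ℝ) := by exact_mod_cast this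
          rwa [Nat.cast_sub (by omega), Nat.cast_one] at h3
        exact mul_le_mul_of_nonneg_right this hdpos.le
      have hj2 : t j ≤ ((M : ℝ) - 1) * d := by
        have : (j : ℝ) ≤ (M : ℝ) - 1 := by
          have := j.isLt
          have : (j : ℕ) ≤ M - 1 := by omega
          have h3 : ((j : ℕ) : ℝ) ≤ ((M - 1 : ℕ) : ℝ) := by exact_mod_cast this
          rwa [Nat.cast_sub (by omega), Nat.cast_one] at h3
        exact mul_le_mul_of_nonneg_right this hdpos.le
      have hMd : (M : ℝ) * d ≤ δ := by
        calc (M:ℝ) * d ≤ M * (δ / M) := mul_le_mul_of_nonneg_left (min_le_right _ _) (by positivity)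
          _ = δ := by field_simp
      have : ((M : ℝ) - 1) * d < (M : ℝ) * d := by nlinarith
      rw [abs_sub_lt_iff]
      constructor <;> linarith
    have := hδ (x := |t i - t j|) (by simpa [Real.dist_eq, abs_abs] using hij)
    rw [Real.dist_eq] at this
    linarith
  refine ⟨t, x, htmono, htmem, ?_⟩
  have key : ∑ i : Fin M, ∑ j : Fin M, x i * G |t i - t j| * h (x j) ≤
      G 0 * S * Hh + ε * A := by
    have step : ∑ i : Fin M, ∑ j : Fin M, x i * G |t i - t j| * h (x j) ≤
        ∑ i : Fin M, ∑ j : Fin M, (x i * G 0 * h (x j) + |x i| * ε * |h (x j)|) := by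
      refine Finset.sum_le_sum fun i _ => Finset.sum_le_sum fun j _ => ?_
      have hk := hker i j
      have h1 : x i * G |t i - t j| * h (x j) - x i * G 0 * h (x j)
          = (x i * h (x j)) * (G |t i - t j| - G 0) := by ring
      have h2 : (x i * h (x j)) * (G |t i - t j| - G 0) ≤ |x i| * ε * |h (x j)| := by
        calc (x i * h (x j)) * (G |t i - t j| - G 0)
            ≤ |(x i * h (x j)) * (G |t i - t j| - G 0)| := le_abs_self _
          _ = |x i| * |h (x j)| * |G |t i - t j| - G 0| := by
              rw [abs_mul, abs_mul]
          _ ≤ |x i| * |h (x j)| * ε := by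
              exact mul_le_mul_of_nonneg_left hk (by positivity)
          _ = |x i| * ε * |h (x j)| := by ring
      linarith
    calc ∑ i : Fin M, ∑ j : Fin M, x i * G |t i - t j| * h (x j)
        ≤ ∑ i : Fin M, ∑ j : Fin M, (x i * G 0 * h (x j) + |x i| * ε * |h (x j)|) := step
      _ = (∑ i : Fin M, ∑ j : Fin M, x i * G 0 * h (x j))
          + (∑ i : Fin M, ∑ j : Fin M, |x i| * ε * |h (x j)|) := by
          simp [Finset.sum_add_distrib]
      _ = (∑ i : Fin M, x i) * G 0 * (∑ j : Fin M, h (x j))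
          + (∑ i : Fin M, |x i|) * ε * (∑ j : Fin M, |h (x j)|) := by
          rw [dsum_helper, dsum_helper]
      _ = G 0 * S * Hh + ε * A := by rw [hS, hH, hA]; ring
  clear_value S Hh A ε
  have hstep : ε * A ≤ ε * (A + 1) := by nlinarith
  have hfin : G 0 * S * Hh + ε * A < 0 := by linarith
  linarith
end
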